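/- Fix a real number K ≥ 1 and an integer n ≥ 1. Then for all x ∈ (1,∞): |dⁿ/dxⁿ cos(K·arccosh x)| ≤ (1/(2n−1)!!)·∏_{m=0}^{n−1}(K²+m²), and moreover lim_{x↓1} dⁿ/dxⁿ cos(K·arccosh x) = ((−1)ⁿ/(2n−1)!!)·∏_{m=0}^{n−1}(K²+m²). -/

import Mathlib

open Real Filter Set Topology

noncomputable section

/-- Inverse hyperbolic cosine on `[1, ∞)`. -/
def arccosh (x : ℝ) : ℝ := Real.log (x + Real.sqrt (x ^ 2 - 1))


lemma sinh_le_mul {t : ℝ} (h0 : 0 ≤ t) (h1 : t ≤ 1) : Real.sinh t ≤ Real.cosh 1 * t := by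
  have key : MonotoneOn (fun t => Real.cosh 1 * t - Real.sinh t) (Icc (0:ℝ) 1) := by
    apply monotoneOn_of_deriv_nonneg (convex_Icc 0 1)
    · exact (Continuous.sub (continuous_const.mul continuous_id) Real.continuous_sinh).continuousOn
    · exact ((differentiable_const _ |>.mul differentiable_id).sub Real.differentiable_sinh).differentiableOn
    · intro x hx
      rw [interior_Icc] at hx
      have : deriv (fun t => Real.cosh 1 * t - Real.sinh t) x = Real.cosh 1 - Real.cosh x := by
        have h : HasDerivAt (fun t => Real.cosh 1 * t - Real.sinh t) (Real.cosh 1 * 1 - Real.cosh x) x :=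
          ((hasDerivAt_id x).const_mul _).sub (Real.hasDerivAt_sinh x)
        simpa using h.deriv
      rw [this, sub_nonneg, Real.cosh_le_cosh]
      rw [abs_of_nonneg hx.1.le]
      simp [hx.2.le, abs_of_nonneg]
  have := key (left_mem_Icc.2 zero_le_one) ⟨h0, h1⟩ h0
  simp only [Real.sinh_zero, mul_zero, sub_zero] at this
  linarith

lemma aux_blowup (n : ℕ) (hn : 1 ≤ n) (u v : ℝ → ℝ)
    (hu : ∀ t, 0 < t → HasDerivAt u (v t) t)
    (δ : ℝ) (hδ0 : 0 < δ) (hδ1 : δ ≤ 1)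
    (m M c : ℝ) (hc : 0 < c)
    (hm : ∀ t ∈ Ioc (0:ℝ) δ, m < u t)
    (hM : ∀ t ∈ Ioc (0:ℝ) δ, u t ≤ M)
    (hv : ∀ t ∈ Ioc (0:ℝ) δ, c / t ^ (2*n) ≤ v t) : False := by
  set p : ℕ := 2*n - 1 with hp
  have hp1 : 1 ≤ p := by omega
  have hpn : p + 1 = 2*n := by omega
  have hpR : (0:ℝ) < p := by exact_mod_cast hp1
  set φ : ℝ → ℝ := fun t => u t + (c / p) * (t ^ p)⁻¹ with hφdef
  have hφ : ∀ t, 0 < t → HasDerivAt φ (v t - c / t ^ (2*n)) t := by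
    intro t ht
    have h1 : HasDerivAt (fun t : ℝ => t ^ p) ((p:ℝ) * t ^ (p-1)) t := by
      simpa using hasDerivAt_pow p t
    have h2 : HasDerivAt (fun t : ℝ => (t ^ p)⁻¹)
        (-((p:ℝ) * t ^ (p-1)) / (t ^ p) ^ 2) t := h1.inv (pow_ne_zero _ ht.ne')
    have h3 := (h2.const_mul (c / p)).add_const 0
    have h4 : HasDerivAt φ (v t + (c / p) * (-((p:ℝ) * t ^ (p-1)) / (t ^ p) ^ 2)) t :=
      (hu t ht).add (h2.const_mul (c / p))
    convert h4 using 1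
    have hexp : (t ^ p) ^ 2 = t ^ (p - 1) * t ^ (2*n) := by
      rw [← pow_mul, ← pow_add]
      congr 1
      omega
    field_simp
    rw [hexp]
    ring
  have hmono : MonotoneOn φ (Ioc 0 δ) := by
    apply monotoneOn_of_deriv_nonneg (convex_Ioc 0 δ)
    · intro t ht
      exact ((hφ t ht.1).continuousAt).continuousWithinAt
    · rw [interior_Ioc]
      intro t ht
      exact ((hφ t ht.1).differentiableAt).differentiableWithinAt
    · rw [interior_Ioc]
      intro t ht
      rw [(hφ t ht.1).deriv]
      have := hv t ⟨ht.1, ht.2.le⟩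
      linarith
  set B : ℝ := M + (c / p) * (δ ^ p)⁻¹ with hB
  have hBbd : ∀ t ∈ Ioc (0:ℝ) δ, u t ≤ B - (c/p) * (t ^ p)⁻¹ := by
    intro t ht
    have h1 : φ t ≤ φ δ := hmono ht (right_mem_Ioc.2 hδ0) ht.2
    have h2 : u δ + (c / p) * (δ ^ p)⁻¹ ≤ B := by
      have := hM δ (right_mem_Ioc.2 hδ0)
      simp only [hB]
      linarith
    simp only [hφdef] at h1
    linarith
  have hBm : m < B := lt_of_lt_of_le (hm δ (right_mem_Ioc.2 hδ0))
    (le_trans (hM δ (right_mem_Ioc.2 hδ0)) (by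
      have : 0 ≤ (c / p) * (δ ^ p)⁻¹ := by positivity
      simp only [hB]; linarith))
  set t₀ : ℝ := min δ (c / ((p:ℝ) * (B - m + 1))) with ht₀
  have ht₀pos : 0 < t₀ := by
    apply lt_min hδ0
    have : 0 < B - m + 1 := by linarith
    positivity
  have ht₀mem : t₀ ∈ Ioc (0:ℝ) δ := ⟨ht₀pos, min_le_left _ _⟩
  -- t₀ ^ p ≤ t₀ since t₀ ≤ 1
  have ht₀le1 : t₀ ≤ 1 := le_trans (min_le_left _ _) hδ1
  have hpow : t₀ ^ p ≤ t₀ := by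
    calc t₀ ^ p ≤ t₀ ^ 1 := pow_le_pow_of_le_one ht₀pos.le ht₀le1 hp1
    _ = t₀ := pow_one t₀
  have hkey : B - m + 1 ≤ (c/p) * (t₀ ^ p)⁻¹ := by
    have h1 : t₀ ≤ c / ((p:ℝ) * (B - m + 1)) := min_le_right _ _
    have hBm1 : 0 < B - m + 1 := by linarith
    have h2 : (c/p) * (t₀ ^ p)⁻¹ ≥ (c/p) * t₀⁻¹ := by
      apply mul_le_mul_of_nonneg_left _ (by positivity)
      exact inv_anti₀ (pow_pos ht₀pos p) hpow
    have h1' : t₀ * ((p:ℝ) * (B - m + 1)) ≤ c := (le_div_iff₀ (by positivity)).1 h1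
    have h3 : B - m + 1 ≤ c / ((p:ℝ) * t₀) := by
      rw [le_div_iff₀ (by positivity)]
      nlinarith [h1']
    have h4 : c / ((p:ℝ) * t₀) = (c/p) * t₀⁻¹ := by
      field_simp
    linarith
  have := hBbd t₀ ht₀mem
  have := hm t₀ ht₀mem
  linarith

lemma W_tendsto_zero (n : ℕ) (hn : 1 ≤ n) (A : ℝ) (hA : 0 < A) (u v : ℝ → ℝ)
    (hu : ∀ t, 0 < t → HasDerivAt u (v t) t)
    (hv : ∀ t, 0 < t → HasDerivAt v
      (-(2*(n:ℝ)) * (Real.cosh t / Real.sinh t) * v t - A * u t) t)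
    (L : ℝ) (hL : 0 < L)
    (huL : Tendsto u (𝓝[>] (0:ℝ)) (𝓝 L)) :
    Tendsto (fun t => Real.sinh t ^ (2*n) * v t) (𝓝[>] (0:ℝ)) (𝓝 0) := by
  have h1 : {t | u t ∈ Ioo (L/2) (2*L)} ∈ 𝓝[>] (0:ℝ) :=
    huL (Ioo_mem_nhds (by linarith) (by linarith))
  obtain ⟨δ₁, hδ₁, hsub⟩ := mem_nhdsGT_iff_exists_Ioc_subset.1 h1
  set δ : ℝ := min δ₁ 1 with hδdef
  have hδ0 : 0 < δ := lt_min hδ₁ one_pos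
  have hδ1 : δ ≤ 1 := min_le_right _ _
  have hbd : ∀ t ∈ Ioc (0:ℝ) δ, L/2 < u t ∧ u t < 2*L := by
    intro t ht
    exact hsub ⟨ht.1, le_trans ht.2 (min_le_left _ _)⟩
  set W : ℝ → ℝ := fun t => Real.sinh t ^ (2*n) * v t with hWdef
  have hW : ∀ t, 0 < t → HasDerivAt W (-A * (Real.sinh t ^ (2*n) * u t)) t := by
    intro t ht
    have hs : Real.sinh t ≠ 0 := (Real.sinh_pos_iff.2 ht).ne'
    have hpow : HasDerivAt (fun t => Real.sinh t ^ (2*n))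
        ((2*n : ℕ) * Real.sinh t ^ (2*n-1) * Real.cosh t) t :=
      (Real.hasDerivAt_sinh t).pow (2*n)
    have hprod : HasDerivAt (fun t => Real.sinh t ^ (2*n) * v t) _ t := hpow.mul (hv t ht)
    convert hprod using 1
    have hss : Real.sinh t ^ (2*n) = Real.sinh t ^ (2*n-1) * Real.sinh t := by
      rw [← pow_succ]; congr 1; omega
    field_simp
    rw [hss]
    push_cast
    ring
  have hant : AntitoneOn W (Ioc 0 δ) := by
    apply antitoneOn_of_deriv_nonpos (convex_Ioc 0 δ)
    · intro t ht; exact ((hW t ht.1).continuousAt).continuousWithinAt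
    · rw [interior_Ioc]; intro t ht
      exact ((hW t ht.1).differentiableAt).differentiableWithinAt
    · rw [interior_Ioc]; intro t ht
      rw [(hW t ht.1).deriv]
      have hu' := (hbd t ⟨ht.1, ht.2.le⟩).1
      have hsn : (0:ℝ) ≤ Real.sinh t ^ (2*n) := pow_nonneg (Real.sinh_nonneg_iff.2 ht.1.le) _
      have : 0 ≤ Real.sinh t ^ (2*n) * u t := by nlinarith
      nlinarith
  set C : ℝ := Real.cosh 1 ^ (2*n) with hCdef
  have hC : 0 < C := by positivity
  have hscomp : ∀ t ∈ Ioc (0:ℝ) δ, Real.sinh t ^ (2*n) ≤ C * t ^ (2*n) := by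
    intro t ht
    have h1 : Real.sinh t ≤ Real.cosh 1 * t := sinh_le_mul ht.1.le (le_trans ht.2 hδ1)
    have h2 : (0:ℝ) ≤ Real.sinh t := Real.sinh_nonneg_iff.2 ht.1.le
    calc Real.sinh t ^ (2*n) ≤ (Real.cosh 1 * t) ^ (2*n) := pow_le_pow_left₀ h2 h1 _
    _ = C * t ^ (2*n) := by rw [mul_pow]
  have hWle0 : ∀ t ∈ Ioc (0:ℝ) δ, W t ≤ 0 := by
    intro t₁ ht₁
    by_contra hpos
    push_neg at hpos
    refine aux_blowup n hn u v hu t₁ ht₁.1 (le_trans ht₁.2 hδ1) (L/2) (2*L) (W t₁ / C)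
      (div_pos hpos hC) ?_ ?_ ?_
    · intro t ht
      exact (hbd t ⟨ht.1, le_trans ht.2 ht₁.2⟩).1
    · intro t ht
      exact (hbd t ⟨ht.1, le_trans ht.2 ht₁.2⟩).2.le
    · intro t ht
      have htδ : t ∈ Ioc (0:ℝ) δ := ⟨ht.1, le_trans ht.2 ht₁.2⟩
      have hWt : W t₁ ≤ W t := hant htδ ht₁ ht.2
      have hsp : (0:ℝ) < Real.sinh t ^ (2*n) := pow_pos (Real.sinh_pos_iff.2 ht.1) _
      have hvt : v t = W t / Real.sinh t ^ (2*n) := by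
        field_simp [hWdef]
        simp only [hWdef]; ring
      have h3 := hscomp t htδ
      have htp : (0:ℝ) < t ^ (2*n) := pow_pos ht.1 _
      rw [hvt, div_div, div_le_div_iff₀ (mul_pos hC htp) hsp]
      nlinarith [mul_le_mul_of_nonneg_left h3 hpos.le,
        mul_le_mul_of_nonneg_right hWt (by positivity : (0:ℝ) ≤ C * t^(2*n))]
  have hdown : ∀ ε > (0:ℝ), ∃ t₁ ∈ Ioc (0:ℝ) δ, -ε < W t₁ := by
    intro ε hε
    by_contra hcon
    push_neg at hcon
    refine aux_blowup n hn (fun t => -u t) (fun t => -v t) (fun t ht => (hu t ht).neg)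
      δ hδ0 hδ1 (-(2*L)) (-(L/2)) (ε / C) (by positivity) ?_ ?_ ?_
    · intro t ht
      show -(2*L) < -u t
      have := (hbd t ht).2; linarith
    · intro t ht
      show -u t ≤ -(L/2)
      have := (hbd t ht).1; linarith
    · intro t ht
      show ε / C / t ^ (2*n) ≤ -v t
      have hWt := hcon t ht
      have hsp : (0:ℝ) < Real.sinh t ^ (2*n) := pow_pos (Real.sinh_pos_iff.2 ht.1) _
      have hvt : -v t = -W t / Real.sinh t ^ (2*n) := by
        field_simp [hWdef]; ring
      have h3 := hscomp t ht
      have htp : (0:ℝ) < t ^ (2*n) := pow_pos ht.1 _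
      rw [hvt, div_div, div_le_div_iff₀ (mul_pos hC htp) hsp]
      nlinarith [mul_le_mul_of_nonneg_left h3 hε.le]
  rw [Metric.tendsto_nhdsWithin_nhds]
  intro ε hε
  obtain ⟨t₁, ht₁, hWt₁⟩ := hdown ε hε
  refine ⟨t₁, ht₁.1, ?_⟩
  intro t htIoi hdist
  have ht0 : 0 < t := htIoi
  rw [Real.dist_eq, sub_zero, abs_of_pos ht0] at hdist
  have htmem : t ∈ Ioc (0:ℝ) δ := ⟨ht0, le_trans hdist.le ht₁.2⟩
  have h5 : W t₁ ≤ W t := hant htmem ht₁ hdist.le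
  have h6 : W t ≤ 0 := hWle0 t htmem
  rw [Real.dist_eq, sub_zero, abs_lt]
  constructor <;> [linarith; linarith]

def UV (K : ℝ) : ℕ → (ℝ → ℝ) × (ℝ → ℝ)
  | 0 => (fun t => Real.cos (K * t), fun t => -(K * Real.sin (K * t)))
  | n+1 =>
    (fun t => (UV K n).2 t / Real.sinh t,
     fun t => ((-(2 * (n:ℝ)) * (Real.cosh t / Real.sinh t) * (UV K n).2 t
         - ((n:ℝ)^2 + K^2) * (UV K n).1 t) * Real.sinh t
         - (UV K n).2 t * Real.cosh t) / Real.sinh t ^ 2)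

lemma UV_deriv (K : ℝ) (n : ℕ) {t : ℝ} (ht : 0 < t) :
    HasDerivAt (UV K n).1 ((UV K n).2 t) t ∧
    HasDerivAt (UV K n).2
      (-(2 * (n:ℝ)) * (Real.cosh t / Real.sinh t) * ((UV K n).2 t)
        - ((n:ℝ)^2 + K^2) * ((UV K n).1 t)) t := by
  induction n with
  | zero =>
    constructor
    · have h : HasDerivAt (fun t : ℝ => Real.cos (K * t)) (-Real.sin (K * t) * K) t :=
        (Real.hasDerivAt_cos (K * t)).comp t ((hasDerivAt_id t).const_mul K |>.congr_deriv (by ring))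
      simpa [UV] using h.congr_deriv (by ring)
    · have h : HasDerivAt (fun t : ℝ => -(K * Real.sin (K * t))) (-(K * (Real.cos (K*t) * K))) t := by
        exact (((Real.hasDerivAt_sin (K * t)).comp t
          ((hasDerivAt_id t).const_mul K |>.congr_deriv (by ring))).const_mul K).neg
      simp only [UV]
      convert h using 1
      push_cast
      ring
  | succ n ih =>
    obtain ⟨hu, hv⟩ := ih
    have hs : Real.sinh t ≠ 0 := (Real.sinh_pos_iff.2 ht).ne'
    have ha : HasDerivAt (UV K (n+1)).1 ((UV K (n+1)).2 t) t := by
      have := hv.div (Real.hasDerivAt_sinh t) hs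
      exact this
    refine ⟨ha, ?_⟩
    have hcs : HasDerivAt (fun t => Real.cosh t / Real.sinh t)
        ((Real.sinh t * Real.sinh t - Real.cosh t * Real.cosh t) / Real.sinh t ^ 2) t :=
      (Real.hasDerivAt_cosh t).div (Real.hasDerivAt_sinh t) hs
    have hG1 : HasDerivAt (fun t => -(2 * (n:ℝ)) * (Real.cosh t / Real.sinh t) * (UV K n).2 t)
        ((-(2 * (n:ℝ)) * ((Real.sinh t * Real.sinh t - Real.cosh t * Real.cosh t) / Real.sinh t ^ 2)) * (UV K n).2 t
          + (-(2 * (n:ℝ)) * (Real.cosh t / Real.sinh t)) *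
            (-(2 * (n:ℝ)) * (Real.cosh t / Real.sinh t) * ((UV K n).2 t)
              - ((n:ℝ)^2 + K^2) * ((UV K n).1 t))) t :=
      (hcs.const_mul (-(2 * (n:ℝ)))).mul hv
    have hG2 : HasDerivAt (fun t => ((n:ℝ)^2 + K^2) * (UV K n).1 t)
        (((n:ℝ)^2 + K^2) * (UV K n).2 t) t := hu.const_mul _
    have hG : HasDerivAt (fun t => -(2 * (n:ℝ)) * (Real.cosh t / Real.sinh t) * (UV K n).2 t - ((n:ℝ)^2 + K^2) * (UV K n).1 t) _ t := hG1.sub hG2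
    have hNum : HasDerivAt (fun t => (-(2 * (n:ℝ)) * (Real.cosh t / Real.sinh t) * (UV K n).2 t - ((n:ℝ)^2 + K^2) * (UV K n).1 t) * Real.sinh t - (UV K n).2 t * Real.cosh t) _ t := (hG.mul (Real.hasDerivAt_sinh t)).sub (hv.mul (Real.hasDerivAt_cosh t))
    have hDen : HasDerivAt (fun t => Real.sinh t ^ 2) ((2:ℕ) * Real.sinh t ^ 1 * Real.cosh t) t :=
      (Real.hasDerivAt_sinh t).pow 2
    have hF : HasDerivAt (fun t => ((-(2 * (n:ℝ)) * (Real.cosh t / Real.sinh t) * (UV K n).2 t - ((n:ℝ)^2 + K^2) * (UV K n).1 t) * Real.sinh t - (UV K n).2 t * Real.cosh t) / Real.sinh t ^ 2) _ t := hNum.div hDen (pow_ne_zero 2 hs)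
    simp only [UV]
    convert hF using 1
    have hc2 : Real.cosh t ^ 2 = Real.sinh t ^ 2 + 1 := Real.cosh_sq t
    set s := Real.sinh t; set c := Real.cosh t; set u := (UV K n).1 t; set v := (UV K n).2 t
    field_simp
    push_cast
    ring_nf

def LL (K : ℝ) : ℕ → ℝ
  | 0 => 1
  | n+1 => -(((n:ℝ)^2 + K^2) / (2*(n:ℝ)+1)) * LL K n

lemma doubleFactorial_succ_eq (n : ℕ) :
    (Nat.doubleFactorial (2*(n+1)-1) : ℝ) = (2*(n:ℝ)+1) * (Nat.doubleFactorial (2*n-1)) := by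
  cases n with
  | zero => norm_num [Nat.doubleFactorial]
  | succ m =>
    have h1 : 2*(m+1+1)-1 = (2*m+1)+2 := by omega
    have h2 : 2*(m+1)-1 = 2*m+1 := by omega
    rw [h1, h2, Nat.doubleFactorial]
    push_cast
    ring

lemma LL_closed (K : ℝ) (n : ℕ) :
    LL K n = (-1)^n / (Nat.doubleFactorial (2*n-1) : ℝ) *
      ∏ m ∈ Finset.range n, (K^2 + (m:ℝ)^2) := by
  induction n with
  | zero => simp [LL, Nat.doubleFactorial]
  | succ n ih =>
    rw [LL, ih, Finset.prod_range_succ, doubleFactorial_succ_eq]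
    have h1 : (Nat.doubleFactorial (2*n-1) : ℝ) ≠ 0 := by
      exact_mod_cast (Nat.doubleFactorial_pos _).ne'
    have h2 : (2*(n:ℝ)+1) ≠ 0 := by positivity
    field_simp
    ring

lemma LL_ne_zero (K : ℝ) (hK : 1 ≤ K) (n : ℕ) : LL K n ≠ 0 := by
  induction n with
  | zero => norm_num [LL]
  | succ n ih =>
    rw [LL]
    have h1 : (0:ℝ) < (n:ℝ)^2 + K^2 := by positivity
    have h2 : (0:ℝ) < 2*(n:ℝ)+1 := by positivity
    intro h
    rcases mul_eq_zero.1 h with h' | h'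
    · rw [neg_eq_zero, div_eq_zero_iff] at h'
      rcases h' with h' | h' <;> linarith
    · exact ih h'

lemma abs_LL (K : ℝ) (hK : 1 ≤ K) (n : ℕ) :
    |LL K n| = 1 / (Nat.doubleFactorial (2*n-1) : ℝ) *
      ∏ m ∈ Finset.range n, (K^2 + (m:ℝ)^2) := by
  rw [LL_closed]
  rw [abs_mul, abs_div, abs_pow, abs_neg, abs_one, one_pow]
  have h1 : (0:ℝ) < (Nat.doubleFactorial (2*n-1) : ℝ) := by
    exact_mod_cast Nat.doubleFactorial_pos _
  have h2 : (0:ℝ) < ∏ m ∈ Finset.range n, (K^2 + (m:ℝ)^2) :=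
    Finset.prod_pos fun m _ => by positivity
  rw [abs_of_pos h1, abs_of_pos h2]

lemma hasDerivAt_sinhpow_mul (n : ℕ) (A : ℝ) (u v : ℝ → ℝ) {t : ℝ} (ht : 0 < t)
    (hvd : HasDerivAt v (-(2*(n:ℝ)) * (Real.cosh t / Real.sinh t) * v t - A * u t) t) :
    HasDerivAt (fun t => Real.sinh t ^ (2*n) * v t) (-A * (Real.sinh t ^ (2*n) * u t)) t := by
  have hs : Real.sinh t ≠ 0 := (Real.sinh_pos_iff.2 ht).ne'
  have hpow : HasDerivAt (fun t => Real.sinh t ^ (2*n))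
      ((2*n : ℕ) * Real.sinh t ^ (2*n-1) * Real.cosh t) t :=
    (Real.hasDerivAt_sinh t).pow (2*n)
  have hprod : HasDerivAt (fun t => Real.sinh t ^ (2*n) * v t) _ t := hpow.mul hvd
  convert hprod using 1
  rcases Nat.eq_zero_or_pos n with hn0 | hn1
  · subst hn0
    simp
    try ring
  · have hss : Real.sinh t ^ (2*n) = Real.sinh t ^ (2*n-1) * Real.sinh t := by
      rw [← pow_succ]; congr 1; omega
    field_simp
    rw [hss]
    push_cast
    ring

lemma UV_tendsto (K : ℝ) (hK : 1 ≤ K) (n : ℕ) :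
    Tendsto (UV K n).1 (𝓝[>] (0:ℝ)) (𝓝 (LL K n)) := by
  induction n with
  | zero =>
    have hc : Tendsto (fun t : ℝ => Real.cos (K * t)) (𝓝 (0:ℝ)) (𝓝 1) := by
      have hcont : Continuous (fun t : ℝ => Real.cos (K * t)) := by fun_prop
      have := hcont.tendsto 0
      simpa using this
    simpa [UV, LL] using hc.mono_left nhdsWithin_le_nhds
  | succ n ih =>
    have hA : (0:ℝ) < (n:ℝ)^2 + K^2 := by positivity
    have hu' := fun (t : ℝ) (ht : (0:ℝ) < t) => (UV_deriv K n ht).1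
    have hv' := fun (t : ℝ) (ht : (0:ℝ) < t) => (UV_deriv K n ht).2
    -- Step 1 : sinh^{2n} * v → 0
    have hW0 : Tendsto (fun t => Real.sinh t ^ (2*n) * (UV K n).2 t) (𝓝[>] (0:ℝ)) (𝓝 0) := by
      rcases Nat.eq_zero_or_pos n with hn0 | hn1
      · subst hn0
        have hc : Tendsto (fun t : ℝ => Real.sinh t ^ (2*0) * (UV K 0).2 t) (𝓝 (0:ℝ)) (𝓝 0) := by
          simp only [UV, pow_zero, one_mul]
          have hcont : Continuous (fun t : ℝ => -(K * Real.sin (K * t))) := by fun_prop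
          have := hcont.tendsto 0
          simpa using this
        exact hc.mono_left nhdsWithin_le_nhds
      · rcases lt_or_gt_of_ne (LL_ne_zero K hK n) with hneg | hpos
        · have hres := W_tendsto_zero n hn1 _ hA (fun t => -(UV K n).1 t)
            (fun t => -(UV K n).2 t)
            (fun t ht => ((hu' t ht).neg))
            (fun t ht => ((hv' t ht).neg).congr_deriv (by ring))
            (-(LL K n)) (by linarith) (ih.neg)
          have := hres.neg
          simp only [neg_zero, mul_neg, neg_neg] at this
          exact this
        · exact W_tendsto_zero n hn1 _ hA _ _ hu' hv' (LL K n) hpos ih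
    -- Step 2 : L'Hôpital
    have hIoo : Ioo (0:ℝ) 1 ∈ 𝓝[>] (0:ℝ) := Ioo_mem_nhdsGT_of_mem ⟨le_rfl, one_pos⟩
    have hlh := HasDerivAt.lhopital_zero_right_on_Ioo (a := (0:ℝ)) (b := 1) one_pos
      (f := fun t => Real.sinh t ^ (2*n) * (UV K n).2 t)
      (f' := fun t => -((n:ℝ)^2 + K^2) * (Real.sinh t ^ (2*n) * (UV K n).1 t))
      (g := fun t => Real.sinh t ^ (2*n+1))
      (g' := fun t => ((2*n+1 : ℕ) : ℝ) * Real.sinh t ^ (2*n) * Real.cosh t)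
      (l := 𝓝 (LL K (n+1)))
      (fun t htm => hasDerivAt_sinhpow_mul n _ _ _ htm.1 (hv' t htm.1))
      (fun t htm => by have h : HasDerivAt (fun t => Real.sinh t ^ (2*n+1)) _ t := (Real.hasDerivAt_sinh t).pow (2*n+1); simpa using h)
      (fun t htm => by
        have h1 : (0:ℝ) < Real.sinh t := Real.sinh_pos_iff.2 htm.1
        have h2 : (0:ℝ) < Real.cosh t := Real.cosh_pos t
        have h3 : (0:ℝ) < ((2*n+1 : ℕ) : ℝ) := by positivity
        positivity)
      hW0
      (by
        have hc : Tendsto (fun t : ℝ => Real.sinh t ^ (2*n+1)) (𝓝 (0:ℝ))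
            (𝓝 (Real.sinh 0 ^ (2*n+1))) := (Real.continuous_sinh.pow _).tendsto 0
        simp only [Real.sinh_zero, zero_pow (Nat.succ_ne_zero _)] at hc
        exact hc.mono_left nhdsWithin_le_nhds)
      (by
        -- tendsto of f'/g'
        have hbase : Tendsto (fun t => (-((n:ℝ)^2 + K^2) * (UV K n).1 t) /
            (((2*n+1 : ℕ) : ℝ) * Real.cosh t)) (𝓝[>] (0:ℝ)) (𝓝 (LL K (n+1))) := by
          have hnum : Tendsto (fun t => -((n:ℝ)^2 + K^2) * (UV K n).1 t) (𝓝[>] (0:ℝ))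
              (𝓝 (-((n:ℝ)^2 + K^2) * LL K n)) := ih.const_mul _
          have hden : Tendsto (fun t : ℝ => ((2*n+1 : ℕ) : ℝ) * Real.cosh t) (𝓝[>] (0:ℝ))
              (𝓝 (((2*n+1 : ℕ) : ℝ) * 1)) := by
            have : Tendsto (fun t : ℝ => ((2*n+1 : ℕ) : ℝ) * Real.cosh t) (𝓝 (0:ℝ))
                (𝓝 (((2*n+1 : ℕ) : ℝ) * Real.cosh 0)) :=
              (continuous_const.mul Real.continuous_cosh).tendsto 0
            simpa using this.mono_left nhdsWithin_le_nhds
          have hden_ne : (((2*n+1 : ℕ) : ℝ) * 1) ≠ 0 := by positivity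
          have := hnum.div hden hden_ne
          convert this using 2
          · rfl
          simp only [LL]
          push_cast
          field_simp
          try ring
        apply hbase.congr'
        filter_upwards [hIoo] with t htm
        have hs : Real.sinh t ≠ 0 := (Real.sinh_pos_iff.2 htm.1).ne'
        have hsp : Real.sinh t ^ (2*n) ≠ 0 := pow_ne_zero _ hs
        field_simp)
    -- conclude
    have : (UV K (n+1)).1 = fun t => (UV K n).2 t / Real.sinh t := by
      simp [UV]
    rw [this]
    apply hlh.congr'
    filter_upwards [hIoo] with t htm
    have hs : Real.sinh t ≠ 0 := (Real.sinh_pos_iff.2 htm.1).ne'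
    have hsp : Real.sinh t ^ (2*n) ≠ 0 := pow_ne_zero _ hs
    show Real.sinh t ^ (2*n) * (UV K n).2 t / Real.sinh t ^ (2*n+1) = (UV K n).2 t / Real.sinh t
    rw [pow_succ]
    field_simp
    try ring

lemma UV_bound (K : ℝ) (hK : 1 ≤ K) (n : ℕ) {t : ℝ} (ht : 0 < t) :
    |(UV K n).1 t| ≤ |LL K n| := by
  have hA : (0:ℝ) < (n:ℝ)^2 + K^2 := by positivity
  set A : ℝ := (n:ℝ)^2 + K^2 with hAdef
  set E : ℝ → ℝ := fun τ => (UV K n).2 τ ^ 2 + A * (UV K n).1 τ ^ 2 with hEdef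
  have hE : ∀ τ, (0:ℝ) < τ → HasDerivAt E
      (-(4*(n:ℝ)) * (Real.cosh τ / Real.sinh τ) * (UV K n).2 τ ^ 2) τ := by
    intro τ hτ
    obtain ⟨hu, hv⟩ := UV_deriv K n hτ
    have h1 := (hv.pow 2).add ((hu.pow 2).const_mul A)
    apply h1.congr_deriv
    push_cast
    ring
  have hEant : AntitoneOn E (Ioi 0) := by
    apply antitoneOn_of_deriv_nonpos (convex_Ioi 0)
    · intro τ hτ; exact ((hE τ hτ).continuousAt).continuousWithinAt
    · rw [interior_Ioi]; intro τ hτ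
      exact ((hE τ hτ).differentiableAt).differentiableWithinAt
    · rw [interior_Ioi]; intro τ hτ
      rw [(hE τ hτ).deriv]
      have h1 : (0:ℝ) < Real.cosh τ / Real.sinh τ :=
        div_pos (Real.cosh_pos τ) (Real.sinh_pos_iff.2 hτ)
      have h2 : (0:ℝ) ≤ (UV K n).2 τ ^ 2 := sq_nonneg _
      have h3 : (0:ℝ) ≤ (4*(n:ℝ)) := by positivity
      have h4 := mul_nonneg (mul_nonneg h3 h1.le) h2
      nlinarith [h4]
  have hElim : Tendsto E (𝓝[>] (0:ℝ)) (𝓝 (A * (LL K n)^2)) := by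
    have hveq : ∀ᶠ τ in 𝓝[>] (0:ℝ),
        (Real.sinh τ * (UV K (n+1)).1 τ) ^ 2 + A * (UV K n).1 τ ^ 2 = E τ := by
      filter_upwards [self_mem_nhdsWithin] with τ hτ
      have hs : Real.sinh τ ≠ 0 := (Real.sinh_pos_iff.2 hτ).ne'
      have : (UV K (n+1)).1 τ = (UV K n).2 τ / Real.sinh τ := by simp [UV]
      rw [this]
      field_simp
      rfl
    have hsinh : Tendsto Real.sinh (𝓝[>] (0:ℝ)) (𝓝 0) := by
      have := Real.continuous_sinh.tendsto 0
      simpa using this.mono_left nhdsWithin_le_nhds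
    have h1 : Tendsto (fun τ => (Real.sinh τ * (UV K (n+1)).1 τ) ^ 2 + A * (UV K n).1 τ ^ 2)
        (𝓝[>] (0:ℝ)) (𝓝 ((0 * LL K (n+1))^2 + A * (LL K n)^2)) :=
      ((hsinh.mul (UV_tendsto K hK (n+1))).pow 2).add (((UV_tendsto K hK n).pow 2).const_mul A)
    simp only [zero_mul, ne_eq, OfNat.ofNat_ne_zero, not_false_eq_true, zero_pow, zero_add] at h1
    exact h1.congr' hveq
  have hEt : E t ≤ A * (LL K n)^2 := by
    apply ge_of_tendsto hElim
    filter_upwards [Ioo_mem_nhdsGT_of_mem (⟨le_rfl, ht⟩ : (0:ℝ) ∈ Ico 0 t)] with τ hτ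
    exact hEant hτ.1 ht hτ.2.le
  have h2 : (UV K n).1 t ^ 2 ≤ (LL K n)^2 := by
    have h3 : (0:ℝ) ≤ (UV K n).2 t ^ 2 := sq_nonneg _
    have h4 : A * (UV K n).1 t ^ 2 ≤ A * (LL K n)^2 := by
      simp only [hEdef] at hEt; linarith
    exact le_of_mul_le_mul_left (by linarith) hA
  have := Real.sqrt_le_sqrt h2
  rwa [Real.sqrt_sq_eq_abs, Real.sqrt_sq_eq_abs] at this

lemma sq_sub_one_pos {x : ℝ} (hx : 1 < x) : 0 < x ^ 2 - 1 := by nlinarith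

lemma sqrt_pos' {x : ℝ} (hx : 1 < x) : 0 < Real.sqrt (x ^ 2 - 1) :=
  Real.sqrt_pos.2 (sq_sub_one_pos hx)

lemma inner_gt_one {x : ℝ} (hx : 1 < x) : 1 < x + Real.sqrt (x ^ 2 - 1) := by
  have := sqrt_pos' hx; linarith

lemma arccosh_pos {x : ℝ} (hx : 1 < x) : 0 < arccosh x :=
  Real.log_pos (inner_gt_one hx)

lemma inner_inv {x : ℝ} (hx : 1 < x) :
    (x + Real.sqrt (x ^ 2 - 1))⁻¹ = x - Real.sqrt (x ^ 2 - 1) := by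
  have h1 : Real.sqrt (x ^ 2 - 1) ^ 2 = x ^ 2 - 1 :=
    Real.sq_sqrt (sq_sub_one_pos hx).le
  have h2 : (x + Real.sqrt (x ^ 2 - 1)) * (x - Real.sqrt (x ^ 2 - 1)) = 1 := by
    nlinarith
  field_simp
  nlinarith

lemma cosh_arccosh {x : ℝ} (hx : 1 < x) : Real.cosh (arccosh x) = x := by
  have h := inner_gt_one hx
  rw [arccosh, Real.cosh_log (by linarith), inner_inv hx]
  ring

lemma sinh_arccosh {x : ℝ} (hx : 1 < x) :
    Real.sinh (arccosh x) = Real.sqrt (x ^ 2 - 1) := by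
  have h := inner_gt_one hx
  rw [arccosh, Real.sinh_log (by linarith), inner_inv hx]
  ring

lemma hasDerivAt_arccosh {x : ℝ} (hx : 1 < x) :
    HasDerivAt arccosh (1 / Real.sqrt (x ^ 2 - 1)) x := by
  have hs := sqrt_pos' hx
  have h1 : HasDerivAt (fun y : ℝ => y ^ 2 - 1) (2 * x) x := by
    simpa using ((hasDerivAt_pow 2 x).sub_const 1)
  have h2 : HasDerivAt (fun y : ℝ => Real.sqrt (y ^ 2 - 1))
      (1 / (2 * Real.sqrt (x ^ 2 - 1)) * (2 * x)) x :=
    (Real.hasDerivAt_sqrt (sq_sub_one_pos hx).ne').comp x h1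
  have h3 : HasDerivAt (fun y : ℝ => y + Real.sqrt (y ^ 2 - 1))
      (1 + 1 / (2 * Real.sqrt (x ^ 2 - 1)) * (2 * x)) x :=
    (hasDerivAt_id x).add h2
  have h4 : HasDerivAt arccosh _ x := h3.log (by have := inner_gt_one hx; linarith)
  convert h4 using 1
  have h1' : Real.sqrt (x ^ 2 - 1) ^ 2 = x ^ 2 - 1 := Real.sq_sqrt (sq_sub_one_pos hx).le
  have hxs : 0 < x + Real.sqrt (x ^ 2 - 1) := by linarith
  field_simp
  ring

lemma tendsto_arccosh : Tendsto arccosh (𝓝[>] (1:ℝ)) (𝓝[>] 0) := by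
  have hc : ContinuousAt arccosh 1 := by
    have h1 : ContinuousAt (fun x : ℝ => x + Real.sqrt (x ^ 2 - 1)) 1 := by
      fun_prop
    have h2 : ContinuousAt Real.log ((1:ℝ) + Real.sqrt (1 ^ 2 - 1)) := by
      apply Real.continuousAt_log; norm_num
    exact ContinuousAt.comp h2 h1
  have h0 : arccosh 1 = 0 := by simp [arccosh]
  rw [tendsto_nhdsWithin_iff]
  constructor
  · have := hc.continuousWithinAt (s := Ioi 1)
    simpa [h0] using this.tendsto
  · filter_upwards [self_mem_nhdsWithin] with x hx
    exact arccosh_pos hx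

lemma iter_eq (K : ℝ) (n : ℕ) :
    ∀ x ∈ Ioi (1:ℝ),
      iteratedDeriv n (fun x : ℝ => Real.cos (K * arccosh x)) x = (UV K n).1 (arccosh x) := by
  induction n with
  | zero => intro x hx; simp [UV]
  | succ n ih =>
    intro x hx
    rw [iteratedDeriv_succ]
    have hev : iteratedDeriv n (fun x : ℝ => Real.cos (K * arccosh x)) =ᶠ[𝓝 x]
        fun y => (UV K n).1 (arccosh y) := by
      filter_upwards [isOpen_Ioi.mem_nhds hx] with y hy
      exact ih y hy
    rw [hev.deriv_eq]
    have ht : 0 < arccosh x := arccosh_pos hx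
    have h1 := (UV_deriv K n ht).1
    have h2 := hasDerivAt_arccosh hx
    have h3 : HasDerivAt (fun y => (UV K n).1 (arccosh y))
        ((UV K n).2 (arccosh x) * (1 / Real.sqrt (x ^ 2 - 1))) x := h1.comp x h2
    rw [h3.deriv]
    have h4 : (UV K (n+1)).1 (arccosh x) = (UV K n).2 (arccosh x) / Real.sinh (arccosh x) := by
      simp [UV]
    rw [h4, sinh_arccosh hx]
    field_simp


/-- Lemma `l.1`: for `K ≥ 1` and `n ≥ 1`, for all `x > 1`,
`|dⁿ/dxⁿ cos(K·arccosh x)| ≤ (1/(2n−1)!!)·∏_{m=0}^{n−1}(K²+m²)`, and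
`lim_{x↓1} dⁿ/dxⁿ cos(K·arccosh x) = ((−1)ⁿ/(2n−1)!!)·∏_{m=0}^{n−1}(K²+m²)`. -/
theorem statement15 (K : ℝ) (hK : 1 ≤ K) (n : ℕ) (hn : 1 ≤ n) :
    (∀ x ∈ Set.Ioi (1 : ℝ),
      |iteratedDeriv n (fun x : ℝ => Real.cos (K * arccosh x)) x| ≤
        (1 / (Nat.doubleFactorial (2 * n - 1) : ℝ)) *
          ∏ m ∈ Finset.range n, (K ^ 2 + (m : ℝ) ^ 2)) ∧
    Tendsto (fun x : ℝ => iteratedDeriv n (fun x : ℝ => Real.cos (K * arccosh x)) x)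
      (nhdsWithin 1 (Set.Ioi 1))
      (nhds ((-1 : ℝ) ^ n / (Nat.doubleFactorial (2 * n - 1) : ℝ) *
        ∏ m ∈ Finset.range n, (K ^ 2 + (m : ℝ) ^ 2))) := by
  constructor
  · intro x hx
    rw [iter_eq K n x hx]
    calc |(UV K n).1 (arccosh x)| ≤ |LL K n| := UV_bound K hK n (arccosh_pos hx)
    _ = _ := abs_LL K hK n
  · have h1 : Tendsto (fun x : ℝ => (UV K n).1 (arccosh x)) (𝓝[>] (1:ℝ)) (𝓝 (LL K n)) :=
      (UV_tendsto K hK n).comp tendsto_arccosh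
    have h2 : (fun x : ℝ => (UV K n).1 (arccosh x)) =ᶠ[𝓝[>] (1:ℝ)]
        fun x : ℝ => iteratedDeriv n (fun x : ℝ => Real.cos (K * arccosh x)) x := by
      filter_upwards [self_mem_nhdsWithin] with x hx
      exact (iter_eq K n x hx).symm
    have h3 := h1.congr' h2
    rwa [LL_closed] at h3
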